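/- Let n ≥ 1 and let α, β : Fin n → ℝ be such that the 2n complex numbers e^{2πi α(i)} and e^{2πi β(j)} are pairwise distinct. Let M₀ be the diagonal matrix with entries e^{2πi α(k)}, let N be the matrix with entries N i j = 1 / (e^{2πi β(j)} − e^{2πi α(i)}), let 𝟏 ∈ ℂⁿ be the all-ones vector, and set M₁ := Id + M₀⁻¹ ⬝ (𝟏 ⬝ (𝟏ᵀ ⬝ N⁻¹)). Then the characteristic polynomial of M₀ ⬝ M₁ equals ∏ j, (X − e^{2πi β(j)}); in particular every e^{2πi β(j)} is an eigenvalue of M₀ ⬝ M₁. -/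

import Mathlib

open Matrix Complex Polynomial Finset

private lemma myEvalCharpoly {n : ℕ} (M : Matrix (Fin n) (Fin n) ℂ) (t : ℂ) :
    M.charpoly.eval t = (Matrix.diagonal (fun _ => t) - M).det := by
  rw [Matrix.charpoly, _root_.eval_det, matPolyEquiv_charmatrix, eval_sub, eval_X, eval_C,
    Matrix.scalar_apply]

private lemma myCauchy {n : ℕ} (hn : 1 ≤ n) (a b : Fin n → ℂ) (ha : Function.Injective a)
    (hb : Function.Injective b) (hab : ∀ i j, b j - a i ≠ 0) :
    IsUnit (Matrix.of fun i j : Fin n => 1 / (b j - a i)).det := by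
  rw [isUnit_iff_ne_zero]
  intro hdet
  obtain ⟨v, hv0, hv⟩ := Matrix.exists_mulVec_eq_zero_iff.mpr hdet
  set P : Polynomial ℂ := ∑ j, C (v j) * ∏ k ∈ univ.erase j, (C (b k) - X) with hP
  have hPdeg : P.natDegree < n := by
    have : P.natDegree ≤ n - 1 := by
      refine natDegree_sum_le_of_forall_le _ _ fun j _ => natDegree_mul_le.trans ?_
      have h1 : (∏ k ∈ univ.erase j, (C (b k) - X)).natDegree ≤ n - 1 := by
        refine (natDegree_prod_le _ _).trans ?_
        refine le_trans (Finset.sum_le_card_nsmul _ _ 1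
          fun k _ => (natDegree_sub_le _ _).trans (by simp)) ?_
        simp [Finset.card_erase_of_mem]
      simpa [natDegree_C] using h1
    omega
  have hPa : ∀ i, P.eval (a i) = 0 := by
    intro i
    have h0 : ∑ j, (1 / (b j - a i)) * v j = 0 := by
      have := congrFun hv i
      simpa [Matrix.mulVec, dotProduct] using this
    have : P.eval (a i) = (∏ k, (b k - a i)) * ∑ j, (1 / (b j - a i)) * v j := by
      rw [Finset.mul_sum, hP, eval_finset_sum]
      refine Finset.sum_congr rfl fun j _ => ?_
      rw [← Finset.mul_prod_erase univ (fun k => b k - a i) (Finset.mem_univ j)]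
      simp only [eval_mul, eval_C, eval_prod, eval_sub, eval_X]
      have hc := hab i j
      field_simp
    rw [this, h0, mul_zero]
  have hP0 : P = 0 :=
    Polynomial.eq_zero_of_natDegree_lt_card_of_eval_eq_zero P ha hPa
      (by simpa using hPdeg)
  apply hv0
  funext j
  have := congrArg (Polynomial.eval (b j)) hP0
  rw [hP, eval_finset_sum, eval_zero] at this
  rw [Finset.sum_eq_single j ?_ (by simp)] at this
  · simp only [eval_mul, eval_C, eval_prod, eval_sub, eval_X] at this
    have hprod : ∏ k ∈ univ.erase j, (b k - b j) ≠ 0 := by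
      refine Finset.prod_ne_zero_iff.mpr fun k hk => ?_
      exact sub_ne_zero.mpr fun h => (Finset.mem_erase.mp hk).1 (hb h)
    have := mul_eq_zero.mp this
    tauto
  · intro j' _ hj'
    have hmem : j ∈ univ.erase j' := Finset.mem_erase.mpr ⟨Ne.symm hj', Finset.mem_univ j⟩
    simp only [eval_mul, eval_C, eval_prod, eval_sub, eval_X]
    rw [Finset.prod_eq_zero hmem (by simp), mul_zero]

private lemma myDetRankOne {n : ℕ} (d w : Fin n → ℂ) (hd : ∀ i, d i ≠ 0) :
    (Matrix.diagonal d - Matrix.vecMulVec (fun _ => (1:ℂ)) w).det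
      = (∏ i, d i) - ∑ i, w i * ∏ k ∈ univ.erase i, d k := by
  have h1 : Matrix.diagonal d - Matrix.vecMulVec (fun _ => (1:ℂ)) w
      = Matrix.diagonal d + Matrix.replicateCol Unit (fun _ => (1:ℂ)) * Matrix.replicateRow Unit (fun i => -w i) := by
    ext i j
    simp [Matrix.vecMulVec_apply, Matrix.mul_apply, Matrix.sub_apply, Matrix.add_apply,
      sub_eq_add_neg]
  have hdet : IsUnit (Matrix.diagonal d).det := by
    rw [Matrix.det_diagonal, isUnit_iff_ne_zero]
    exact Finset.prod_ne_zero_iff.mpr fun i _ => hd i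
  have hinv : (Matrix.diagonal d)⁻¹ = Matrix.diagonal (fun i => (d i)⁻¹) :=
    Matrix.inv_eq_right_inv (by
      rw [Matrix.diagonal_mul_diagonal,
        show (fun i => d i * (d i)⁻¹) = fun _ => (1:ℂ) from funext fun i => mul_inv_cancel₀ (hd i),
        Matrix.diagonal_one])
  rw [h1, Matrix.det_add_replicateCol_mul_replicateRow hdet, Matrix.det_diagonal, Matrix.det_unique]
  have h2 : ((1 + (Matrix.replicateRow Unit (fun i => -w i) : Matrix Unit (Fin n) ℂ) * (Matrix.diagonal d)⁻¹ *
      (Matrix.replicateCol Unit (fun _ => (1:ℂ)) : Matrix (Fin n) Unit ℂ) : Matrix Unit Unit ℂ)) default default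
      = 1 - ∑ i, w i * (d i)⁻¹ := by
    simp [Matrix.mul_apply, hinv, Matrix.diagonal_apply, Finset.mul_sum, sub_eq_add_neg,
      Finset.sum_neg_distrib]
  rw [h2, mul_sub, mul_one, Finset.mul_sum]
  congr 1
  refine Finset.sum_congr rfl fun i _ => ?_
  rw [← Finset.mul_prod_erase univ d (Finset.mem_univ i)]
  field_simp [hd i]

private lemma myMainAux {n : ℕ} (hn : 1 ≤ n) (a b : Fin n → ℂ)
    (ha : Function.Injective a) (hb : Function.Injective b)
    (hab : ∀ i j, b j - a i ≠ 0) (ha0 : ∀ i, a i ≠ 0)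
    (M₀ N M₁ : Matrix (Fin n) (Fin n) ℂ) (hM₀ : M₀ = Matrix.diagonal a)
    (hN : N = Matrix.of fun i j => 1 / (b j - a i))
    (hM₁ : M₁ = 1 + M₀⁻¹ *
      Matrix.vecMulVec (fun _ => (1 : ℂ)) (Matrix.vecMul (fun _ => (1 : ℂ)) N⁻¹)) :
    (M₀ * M₁).charpoly = ∏ j, (X - C (b j)) ∧
      ∀ j, b j ∈ spectrum ℂ (M₀ * M₁) := by
  classical
  have hNdet : IsUnit N.det := hN ▸ myCauchy hn a b ha hb hab
  set w := Matrix.vecMul (fun _ => (1:ℂ)) N⁻¹ with hw_def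
  have hwN : ∀ j, ∑ i, w i * (1 / (b j - a i)) = 1 := by
    intro j
    have h1 : Matrix.vecMul w N = fun _ => (1:ℂ) := by
      rw [hw_def, Matrix.vecMul_vecMul, Matrix.nonsing_inv_mul N hNdet, Matrix.vecMul_one]
    have h2 := congrFun h1 j
    rw [hN] at h2
    simpa [Matrix.vecMul, dotProduct] using h2
  have hM₀det : IsUnit M₀.det := by
    rw [hM₀, Matrix.det_diagonal, isUnit_iff_ne_zero]
    exact Finset.prod_ne_zero_iff.mpr fun i _ => ha0 i
  have hA : M₀ * M₁ = M₀ + Matrix.vecMulVec (fun _ => (1:ℂ)) w := by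
    rw [hM₁, Matrix.mul_add, Matrix.mul_one, ← Matrix.mul_assoc,
      Matrix.mul_nonsing_inv _ hM₀det, Matrix.one_mul]
  set F : Polynomial ℂ :=
    (∏ i, (X - C (a i))) - ∑ i, C (w i) * ∏ k ∈ univ.erase i, (X - C (a k)) with hF_def
  set G : Polynomial ℂ := ∏ j, (X - C (b j)) with hG_def
  have hFeval : ∀ t : ℂ,
      F.eval t = (∏ i, (t - a i)) - ∑ i, w i * ∏ k ∈ univ.erase i, (t - a k) := by
    intro t
    simp [hF_def, eval_prod, eval_finset_sum]
  have hkey : ∀ t : ℂ, (∀ i, t - a i ≠ 0) →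
      (M₀ * M₁).charpoly.eval t = F.eval t := by
    intro t ht
    rw [myEvalCharpoly, hA, hM₀]
    have hmat : Matrix.diagonal (fun _ => t) -
        (Matrix.diagonal a + Matrix.vecMulVec (fun _ => (1:ℂ)) w)
        = Matrix.diagonal (fun i => t - a i) - Matrix.vecMulVec (fun _ => (1:ℂ)) w := by
      ext i j
      by_cases h : i = j <;> simp [h, Matrix.diagonal] <;> ring
    rw [hmat, myDetRankOne _ _ ht, hFeval]
  have hFb : ∀ j, F.eval (b j) = 0 := by
    intro j
    rw [hFeval]
    have h1 : ∑ i, w i * ∏ k ∈ univ.erase i, (b j - a k) = ∏ i, (b j - a i) := by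
      calc ∑ i, w i * ∏ k ∈ univ.erase i, (b j - a k)
          = ∑ i, (∏ k, (b j - a k)) * (w i * (1 / (b j - a i))) := by
            refine Finset.sum_congr rfl fun i _ => ?_
            rw [← Finset.mul_prod_erase univ (fun k => b j - a k) (Finset.mem_univ i)]
            have hc := hab i j
            field_simp
        _ = (∏ k, (b j - a k)) * ∑ i, w i * (1 / (b j - a i)) := by rw [← Finset.mul_sum]
        _ = ∏ i, (b j - a i) := by rw [hwN j, mul_one]
    rw [h1, sub_self]
  have hGb : ∀ j, G.eval (b j) = 0 := by
    intro j
    rw [hG_def, eval_prod]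
    exact Finset.prod_eq_zero (Finset.mem_univ j) (by simp)
  have hmonicP : (∏ i, (X - C (a i)) : Polynomial ℂ).Monic :=
    monic_prod_of_monic _ _ fun i _ => monic_X_sub_C _
  have hdegP : (∏ i, (X - C (a i)) : Polynomial ℂ).degree = (n : ℕ) := by
    rw [degree_prod]
    simp [degree_X_sub_C]
  have hdegG : G.degree = (n : ℕ) := by
    rw [hG_def, degree_prod]
    simp [degree_X_sub_C]
  have hmonicG : G.Monic := monic_prod_of_monic _ _ fun j _ => monic_X_sub_C _
  have hQdeg : (∑ i, C (w i) * ∏ k ∈ univ.erase i, (X - C (a k)) : Polynomial ℂ).degree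
      < (n : ℕ) := by
    refine lt_of_le_of_lt (degree_sum_le _ _) ?_
    rw [Finset.sup_lt_iff (by exact_mod_cast WithBot.bot_lt_coe n)]
    intro i _
    refine lt_of_le_of_lt (degree_mul_le _ _) ?_
    have h2 : (∏ k ∈ univ.erase i, (X - C (a k)) : Polynomial ℂ).degree
        = ((n - 1 : ℕ) : WithBot ℕ) := by
      rw [degree_prod]
      simp [degree_X_sub_C, Finset.card_erase_of_mem]
    rw [h2]
    calc degree (C (w i)) + ((n - 1 : ℕ) : WithBot ℕ)
        ≤ 0 + ((n - 1 : ℕ) : WithBot ℕ) := add_le_add_left degree_C_le _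
      _ = ((n - 1 : ℕ) : WithBot ℕ) := zero_add _
      _ < (n : ℕ) := by exact_mod_cast Nat.sub_lt hn one_pos
  have hmonicF : F.Monic := by
    rw [hF_def, sub_eq_add_neg]
    exact hmonicP.add_of_left (by rw [degree_neg, hdegP]; exact hQdeg)
  have hdegF : F.degree = (n : ℕ) := by
    rw [hF_def, sub_eq_add_neg, degree_add_eq_left_of_degree_lt, hdegP]
    rw [degree_neg, hdegP]
    exact hQdeg
  have hFG : F = G := by
    by_cases hne : F = G
    · exact hne
    have hsub : F - G ≠ 0 := sub_ne_zero.mpr hne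
    have hdlt : (F - G).degree < ((n : ℕ) : WithBot ℕ) := by
      have := degree_sub_lt (hdegF.trans hdegG.symm) hmonicF.ne_zero
        (by rw [hmonicF.leadingCoeff, hmonicG.leadingCoeff])
      rwa [hdegF] at this
    have h0 : F - G = 0 := by
      refine Polynomial.eq_zero_of_natDegree_lt_card_of_eval_eq_zero _ hb
        (fun j => by rw [eval_sub, hFb, hGb, sub_self]) ?_
      have := (Polynomial.natDegree_lt_iff_degree_lt hsub).mpr hdlt
      simpa using this
    exact absurd (sub_eq_zero.mp h0) hne
  have hchar : (M₀ * M₁).charpoly = G := by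
    have h0 : (M₀ * M₁).charpoly - F = 0 := by
      apply Polynomial.eq_zero_of_infinite_isRoot
      apply Set.Infinite.mono ?_ ((Set.finite_range a).infinite_compl)
      intro t ht
      simp only [Set.mem_setOf_eq, IsRoot, eval_sub]
      rw [hkey t (fun i => sub_ne_zero.mpr fun h => ht ⟨i, h.symm⟩), sub_self]
    rw [sub_eq_zero.mp h0, hFG]
  refine ⟨hchar, fun j => ?_⟩
  rw [spectrum.mem_iff]
  intro hu
  have hu' : IsUnit (Matrix.diagonal (fun _ => b j) - M₀ * M₁).det := by
    apply (Matrix.isUnit_iff_isUnit_det _).mp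
    convert hu using 2
    rw [Matrix.algebraMap_eq_diagonal]; rfl
  rw [← myEvalCharpoly, hchar] at hu'
  rw [hGb j] at hu'
  exact (not_isUnit_zero : ¬ IsUnit (0:ℂ)) hu'

theorem charpoly_hypergeometric_monodromy (n : ℕ) (hn : 1 ≤ n) (α β : Fin n → ℝ)
    (hdist : Function.Injective
      (Sum.elim (fun i => Complex.exp (2 * Real.pi * Complex.I * α i))
        (fun j => Complex.exp (2 * Real.pi * Complex.I * β j)) : Fin n ⊕ Fin n → ℂ))
    (M₀ : Matrix (Fin n) (Fin n) ℂ)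
    (hM₀ : M₀ = Matrix.diagonal fun k => Complex.exp (2 * Real.pi * Complex.I * α k))
    (N : Matrix (Fin n) (Fin n) ℂ)
    (hN : N = Matrix.of fun i j => 1 / (Complex.exp (2 * Real.pi * Complex.I * β j) -
      Complex.exp (2 * Real.pi * Complex.I * α i)))
    (M₁ : Matrix (Fin n) (Fin n) ℂ)
    (hM₁ : M₁ = 1 + M₀⁻¹ *
      Matrix.vecMulVec (fun _ => (1 : ℂ)) (Matrix.vecMul (fun _ => (1 : ℂ)) N⁻¹)) :
    (M₀ * M₁).charpoly = ∏ j, (X - C (Complex.exp (2 * Real.pi * Complex.I * β j))) ∧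
      ∀ j, Complex.exp (2 * Real.pi * Complex.I * β j) ∈ spectrum ℂ (M₀ * M₁) := by
  have ha : Function.Injective (fun i => Complex.exp (2 * Real.pi * Complex.I * α i)) := by
    intro i j h
    have := @hdist (Sum.inl i) (Sum.inl j) (by simpa using h)
    simpa using this
  have hb : Function.Injective (fun j => Complex.exp (2 * Real.pi * Complex.I * β j)) := by
    intro i j h
    have := @hdist (Sum.inr i) (Sum.inr j) (by simpa using h)
    simpa using this
  have hab : ∀ i j, Complex.exp (2 * Real.pi * Complex.I * β j) -
      Complex.exp (2 * Real.pi * Complex.I * α i) ≠ 0 := by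
    intro i j h
    have := @hdist (Sum.inl i) (Sum.inr j) (by simpa using (sub_eq_zero.mp h).symm)
    simp at this
  exact myMainAux hn _ _ ha hb hab (fun i => Complex.exp_ne_zero _) M₀ N M₁ hM₀ hN hM₁
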